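/- Let Z₁ ⊆ B(H₁) and Z₂ ⊆ B(H₂) be spin factors and let φ : Z₁ → Z₂ be a nonzero injective linear map satisfying φ({a,b,c}) = {φ(a),φ(b),φ(c)} for all a,b,c ∈ Z₁. Then there exists μ ∈ ℂ with |μ| = 1 such that the map U := μ·φ satisfies U(x*) = U(x)* for every x ∈ Z₁ and is an isometric embedding for the canonical Hilbert space structures: ⟨U(x),U(y)⟩ = ⟨x,y⟩ for all x,y ∈ Z₁, where ⟨·,·⟩ denotes the canonical inner products of Z₁ and Z₂ respectively. -/

import Mathlib

open scoped ComplexConjugate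

set_option linter.unusedSectionVars false

noncomputable def ipOp {H : Type*} [NormedAddCommGroup H] [InnerProductSpace ℂ H]
    [CompleteSpace H] (T S : H →L[ℂ] H) : ℂ :=
  open Classical in
  if h : ∃ c : ℂ, T * star S + star S * T = (2 * c) • (1 : H →L[ℂ] H) then h.choose else 0

section SF

variable {H : Type*} [NormedAddCommGroup H] [InnerProductSpace ℂ H] [CompleteSpace H]
  [Nontrivial H]

lemma one_cl_ne_zero : (1 : H →L[ℂ] H) ≠ 0 := by
  obtain ⟨v, hv⟩ := exists_ne (0 : H)
  intro h
  have := ContinuousLinearMap.ext_iff.1 h v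
  simp at this
  exact hv this

lemma smul_one_cancel {c d : ℂ} (h : c • (1 : H →L[ℂ] H) = d • 1) : c = d := by
  obtain ⟨v, hv⟩ := exists_ne (0 : H)
  have := ContinuousLinearMap.ext_iff.1 h v
  simp only [ContinuousLinearMap.smul_apply, ContinuousLinearMap.one_apply] at this
  exact smul_left_injective ℂ hv this

lemma ipOp_eq {A B : H →L[ℂ] H} {c : ℂ}
    (h : A * star B + star B * A = (2 * c) • (1 : H →L[ℂ] H)) : ipOp A B = c := by
  have hex : ∃ c : ℂ, A * star B + star B * A = (2 * c) • (1 : H →L[ℂ] H) := ⟨c, h⟩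
  rw [ipOp, dif_pos hex]
  have h2 := hex.choose_spec
  have h3 : (2 * hex.choose) • (1 : H →L[ℂ] H) = (2 * c) • 1 := by rw [← h2, h]
  exact mul_left_cancel₀ two_ne_zero (smul_one_cancel h3)

variable {Z : Submodule ℂ (H →L[ℂ] H)}
  (hstar : ∀ A ∈ Z, star A ∈ Z) (hsq : ∀ A ∈ Z, ∃ c : ℂ, A * A = c • (1 : H →L[ℂ] H))

include hstar hsq

lemma exists_ip {A B : H →L[ℂ] H} (hA : A ∈ Z) (hB : B ∈ Z) :
    ∃ c : ℂ, A * star B + star B * A = (2 * c) • (1 : H →L[ℂ] H) := by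
  obtain ⟨c1, h1⟩ := hsq _ (Z.add_mem hA (hstar B hB))
  obtain ⟨c2, h2⟩ := hsq A hA
  obtain ⟨c3, h3⟩ := hsq _ (hstar B hB)
  refine ⟨(c1 - c2 - c3)/2, ?_⟩
  have e : A * star B + star B * A
      = (A + star B) * (A + star B) - A * A - star B * star B := by noncomm_ring
  rw [e, h1, h2, h3]
  rw [← sub_smul, ← sub_smul]
  congr 1
  ring

lemma ipOp_spec {A B : H →L[ℂ] H} (hA : A ∈ Z) (hB : B ∈ Z) :
    A * star B + star B * A = (2 * ipOp A B) • (1 : H →L[ℂ] H) := by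
  obtain ⟨c, hc⟩ := exists_ip hstar hsq hA hB
  rwa [ipOp_eq hc]

end SF

lemma triple_aux {R : Type*} [Ring R] [Algebra ℂ R] (A X C : R) (p q r : ℂ)
    (h1 : A * X + X * A = p • 1) (h2 : A * C + C * A = r • 1) (h3 : C * X + X * C = q • 1) :
    A * X * C + C * X * A = p • C + q • A - r • X := by
  have e1 : A * X = p • 1 - X * A := eq_sub_of_add_eq h1
  have e2 : A * C = r • 1 - C * A := eq_sub_of_add_eq h2
  have h3' : X * C + C * X = q • 1 := by rw [add_comm]; exact h3
  calc A * X * C + C * X * A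
      = (p • 1 - X * A) * C + C * X * A := by rw [e1]
    _ = p • C - X * A * C + C * X * A := by rw [sub_mul, smul_mul_assoc, one_mul]
    _ = p • C - X * (A * C) + C * X * A := by rw [mul_assoc X A C]
    _ = p • C - X * (r • 1 - C * A) + C * X * A := by rw [e2]
    _ = p • C - (r • X - X * (C * A)) + C * X * A := by
        rw [mul_sub, mul_smul_comm, mul_one]
    _ = p • C - (r • X - X * C * A) + C * X * A := by rw [← mul_assoc]
    _ = p • C - r • X + (X * C * A + C * X * A) := by abel
    _ = p • C - r • X + (X * C + C * X) * A := by rw [← add_mul]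
    _ = p • C - r • X + q • A := by rw [h3', smul_mul_assoc, one_mul]
    _ = p • C + q • A - r • X := by abel

section SF2

variable {H : Type*} [NormedAddCommGroup H] [InnerProductSpace ℂ H] [CompleteSpace H]
  [Nontrivial H]
  {Z : Submodule ℂ (H →L[ℂ] H)}
  (hstar : ∀ A ∈ Z, star A ∈ Z) (hsq : ∀ A ∈ Z, ∃ c : ℂ, A * A = c • (1 : H →L[ℂ] H))

include hstar hsq

lemma ip_add_left {A A' B : H →L[ℂ] H} (hA : A ∈ Z) (hA' : A' ∈ Z) (hB : B ∈ Z) :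
    ipOp (A + A') B = ipOp A B + ipOp A' B := by
  refine ipOp_eq ?_
  have h1 := ipOp_spec hstar hsq hA hB
  have h2 := ipOp_spec hstar hsq hA' hB
  have e : (A + A') * star B + star B * (A + A')
      = (A * star B + star B * A) + (A' * star B + star B * A') := by noncomm_ring
  rw [e, h1, h2, ← add_smul]
  congr 1; ring

lemma ip_smul_left {A B : H →L[ℂ] H} (t : ℂ) (hA : A ∈ Z) (hB : B ∈ Z) :
    ipOp (t • A) B = t * ipOp A B := by
  refine ipOp_eq ?_
  have h1 := ipOp_spec hstar hsq hA hB
  have e : (t • A) * star B + star B * (t • A) = t • (A * star B + star B * A) := by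
    rw [smul_mul_assoc, mul_smul_comm, smul_add]
  rw [e, h1, smul_smul]
  congr 1; ring

lemma ip_smul_right {A B : H →L[ℂ] H} (t : ℂ) (hA : A ∈ Z) (hB : B ∈ Z) :
    ipOp A (t • B) = (starRingEnd ℂ) t * ipOp A B := by
  refine ipOp_eq ?_
  have h1 := ipOp_spec hstar hsq hA hB
  have e : A * star (t • B) + star (t • B) * A
      = (starRingEnd ℂ) t • (A * star B + star B * A) := by
    rw [star_smul, smul_mul_assoc, mul_smul_comm, smul_add]; rfl
  rw [e, h1, smul_smul]
  congr 1; ring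

lemma ip_add_right {A B B' : H →L[ℂ] H} (hA : A ∈ Z) (hB : B ∈ Z) (hB' : B' ∈ Z) :
    ipOp A (B + B') = ipOp A B + ipOp A B' := by
  refine ipOp_eq ?_
  have h1 := ipOp_spec hstar hsq hA hB
  have h2 := ipOp_spec hstar hsq hA hB'
  have e : A * star (B + B') + star (B + B') * A
      = (A * star B + star B * A) + (A * star B' + star B' * A) := by
    rw [star_add]; noncomm_ring
  rw [e, h1, h2, ← add_smul]
  congr 1; ring

lemma ip_star_star {A B : H →L[ℂ] H} (hA : A ∈ Z) (hB : B ∈ Z) :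
    ipOp (star A) (star B) = (starRingEnd ℂ) (ipOp A B) := by
  have h1 := ipOp_spec hstar hsq hA hB
  have e := congrArg star h1
  simp only [star_add, star_mul, star_star, star_smul, star_one] at e
  -- e : B * star A + star A * B = (star (2 * ipOp A B)) • 1
  refine ipOp_eq ?_
  rw [star_star]
  rw [show star A * B + B * star A = B * star A + star A * B from add_comm _ _]
  rw [e]
  congr 1
  simp [Complex.star_def, map_mul]
  ring

lemma ip_bsymm {A B : H →L[ℂ] H} (hA : A ∈ Z) (hB : B ∈ Z) :
    ipOp A (star B) = ipOp B (star A) := by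
  have h1 := ipOp_spec hstar hsq hA (hstar B hB)
  rw [star_star] at h1
  have h2 : B * star (star A) + star (star A) * B = (2 * ipOp A (star B)) • 1 := by
    rw [star_star, add_comm]
    exact h1
  exact (ipOp_eq h2).symm

omit hstar hsq in
lemma ip_zero_left {B : H →L[ℂ] H} : ipOp (0 : H →L[ℂ] H) B = 0 := by
  refine ipOp_eq ?_
  simp

lemma ip_self_zero {A : H →L[ℂ] H} (hA : A ∈ Z) (h0 : ipOp A A = 0) : A = 0 := by
  have h1 := ipOp_spec hstar hsq hA hA
  rw [h0] at h1
  simp only [mul_zero, zero_smul] at h1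
  ext v
  have hv := ContinuousLinearMap.ext_iff.1 h1 v
  simp only [ContinuousLinearMap.add_apply, ContinuousLinearMap.mul_apply,
    ContinuousLinearMap.zero_apply] at hv
  have hinner := congrArg (fun w => (inner ℂ w v : ℂ)) hv
  simp only [inner_add_left, inner_zero_left] at hinner
  rw [ContinuousLinearMap.star_eq_adjoint] at hinner
  have e1 : (inner ℂ (A ((ContinuousLinearMap.adjoint A) v)) v : ℂ)
      = inner ℂ ((ContinuousLinearMap.adjoint A) v) ((ContinuousLinearMap.adjoint A) v) := by
    rw [← ContinuousLinearMap.adjoint_inner_right]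
  have e2 : (inner ℂ ((ContinuousLinearMap.adjoint A) (A v)) v : ℂ)
      = inner ℂ (A v) (A v) := by
    rw [ContinuousLinearMap.adjoint_inner_left]
  rw [e1, e2, inner_self_eq_norm_sq_to_K, inner_self_eq_norm_sq_to_K] at hinner
  have h3 : (‖(ContinuousLinearMap.adjoint A) v‖ ^ 2 + ‖A v‖ ^ 2 : ℝ) = 0 := by
    exact RCLike.ofReal_eq_zero.1 (by push_cast; exact hinner)
  have h4 : ‖A v‖ = 0 := by nlinarith [norm_nonneg (A v), norm_nonneg ((ContinuousLinearMap.adjoint A) v), sq_nonneg ‖A v‖]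
  simp only [ContinuousLinearMap.zero_apply]
  exact norm_eq_zero.1 h4

lemma ip_triple {A B C : H →L[ℂ] H} (hA : A ∈ Z) (hB : B ∈ Z) (hC : C ∈ Z) :
    A * star B * C + C * star B * A
      = (2 * ipOp A B) • C + (2 * ipOp C B) • A - (2 * ipOp A (star C)) • star B := by
  have h1 := ipOp_spec hstar hsq hA hB
  have h2 : A * C + C * A = (2 * ipOp A (star C)) • 1 := by
    have := ipOp_spec hstar hsq hA (hstar C hC)
    rwa [star_star] at this
  have h3 : C * star B + star B * C = (2 * ipOp C B) • 1 := ipOp_spec hstar hsq hC hB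
  exact triple_aux A (star B) C _ _ _ h1 h2 h3

end SF2


set_option maxHeartbeats 2000000 in

/-- a nonzero injective triple morphism between spin factors is, after
multiplication by a unimodular constant `μ`, an involution-preserving isometric embedding
for the canonical Hilbert space structures (where the canonical inner product `⟨A,B⟩`
is determined by `A B* + B* A = 2⟨A,B⟩·id`). -/
theorem spin_factor_morphism_standard_form
    {H₁ : Type*} [NormedAddCommGroup H₁] [InnerProductSpace ℂ H₁] [CompleteSpace H₁]
    [Nontrivial H₁]
    {H₂ : Type*} [NormedAddCommGroup H₂] [InnerProductSpace ℂ H₂] [CompleteSpace H₂]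
    [Nontrivial H₂]
    (Z₁ : Submodule ℂ (H₁ →L[ℂ] H₁)) (Z₂ : Submodule ℂ (H₂ →L[ℂ] H₂))
    [FiniteDimensional ℂ Z₁] [FiniteDimensional ℂ Z₂]
    (hstar₁ : ∀ A ∈ Z₁, star A ∈ Z₁) (hstar₂ : ∀ A ∈ Z₂, star A ∈ Z₂)
    (hsq₁ : ∀ A ∈ Z₁, ∃ c : ℂ, A * A = c • (1 : H₁ →L[ℂ] H₁))
    (hsq₂ : ∀ A ∈ Z₂, ∃ c : ℂ, A * A = c • (1 : H₂ →L[ℂ] H₂))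
    (hdim₁ : 2 ≤ Module.finrank ℂ Z₁) (hdim₂ : 2 ≤ Module.finrank ℂ Z₂)
    (φ : Z₁ →ₗ[ℂ] Z₂) (hne : φ ≠ 0) (hinj : Function.Injective φ)
    (hφ : ∀ a b c w : Z₁,
      (w : H₁ →L[ℂ] H₁) =
        (1/2 : ℂ) • ((a : H₁ →L[ℂ] H₁) * star (b : H₁ →L[ℂ] H₁) * (c : H₁ →L[ℂ] H₁) +
          (c : H₁ →L[ℂ] H₁) * star (b : H₁ →L[ℂ] H₁) * (a : H₁ →L[ℂ] H₁)) →
      (φ w : H₂ →L[ℂ] H₂) =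
        (1/2 : ℂ) • ((φ a : H₂ →L[ℂ] H₂) * star (φ b : H₂ →L[ℂ] H₂) * (φ c : H₂ →L[ℂ] H₂) +
          (φ c : H₂ →L[ℂ] H₂) * star (φ b : H₂ →L[ℂ] H₂) * (φ a : H₂ →L[ℂ] H₂))) :
    ∃ μ : ℂ, ‖μ‖ = 1 ∧
      -- `U := μ·φ` preserves the involution: `U(x*) = U(x)*`
      (∀ x y : Z₁, (y : H₁ →L[ℂ] H₁) = star (x : H₁ →L[ℂ] H₁) →
        μ • (φ y : H₂ →L[ℂ] H₂) = star (μ • (φ x : H₂ →L[ℂ] H₂))) ∧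
      -- `U := μ·φ` is isometric for the canonical inner products:
      -- if `⟨x,y⟩ = c` in `Z₁` and `⟨U x, U y⟩ = d` in `Z₂`, then `d = c`.
      (∀ x y : Z₁, ∀ c d : ℂ,
        (x : H₁ →L[ℂ] H₁) * star (y : H₁ →L[ℂ] H₁) + star (y : H₁ →L[ℂ] H₁) * (x : H₁ →L[ℂ] H₁)
            = (2 * c) • (1 : H₁ →L[ℂ] H₁) →
        (μ • (φ x : H₂ →L[ℂ] H₂)) * star (μ • (φ y : H₂ →L[ℂ] H₂)) +
            star (μ • (φ y : H₂ →L[ℂ] H₂)) * (μ • (φ x : H₂ →L[ℂ] H₂))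
            = (2 * d) • (1 : H₂ →L[ℂ] H₂) →
        d = c) := by
  classical
  set σ₁ : Z₁ → Z₁ := fun x => ⟨star (x : H₁ →L[ℂ] H₁), hstar₁ _ x.2⟩ with hσ₁
  set σ₂ : Z₂ → Z₂ := fun x => ⟨star (x : H₂ →L[ℂ] H₂), hstar₂ _ x.2⟩ with hσ₂
  have c1 : ∀ x : Z₁, ((σ₁ x : Z₁) : H₁ →L[ℂ] H₁) = star (x : H₁ →L[ℂ] H₁) := fun x => rfl
  have c2 : ∀ x : Z₂, ((σ₂ x : Z₂) : H₂ →L[ℂ] H₂) = star (x : H₂ →L[ℂ] H₂) := fun x => rfl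
  have σ₁invol : ∀ x, σ₁ (σ₁ x) = x := fun x => Subtype.ext (by rw [c1, c1, star_star])
  have σ₂invol : ∀ x, σ₂ (σ₂ x) = x := fun x => Subtype.ext (by rw [c2, c2, star_star])
  have σ₁add : ∀ x y, σ₁ (x + y) = σ₁ x + σ₁ y := fun x y =>
    Subtype.ext (by push_cast [c1]; rw [star_add])
  have σ₂smul : ∀ (t : ℂ) x, σ₂ (t • x) = (starRingEnd ℂ) t • σ₂ x := fun t x =>
    Subtype.ext (by push_cast [c2]; rw [star_smul]; rfl)
  have σ₁smul : ∀ (t : ℂ) x, σ₁ (t • x) = (starRingEnd ℂ) t • σ₁ x := fun t x =>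
    Subtype.ext (by push_cast [c1]; rw [star_smul]; rfl)
  set k : Z₁ → Z₂ := fun c => σ₂ (φ (σ₁ c)) with hk
  -- master identity
  have Emaster : ∀ a b c : Z₁,
      ipOp (a : H₁ →L[ℂ] H₁) (b : H₁ →L[ℂ] H₁) • φ c
        + ipOp (c : H₁ →L[ℂ] H₁) (b : H₁ →L[ℂ] H₁) • φ a
        - ipOp (a : H₁ →L[ℂ] H₁) (star (c : H₁ →L[ℂ] H₁)) • φ (σ₁ b)
      = ipOp (φ a : H₂ →L[ℂ] H₂) (φ b : H₂ →L[ℂ] H₂) • φ c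
        + ipOp (φ c : H₂ →L[ℂ] H₂) (φ b : H₂ →L[ℂ] H₂) • φ a
        - ipOp (φ a : H₂ →L[ℂ] H₂) (star (φ c : H₂ →L[ℂ] H₂)) • σ₂ (φ b) := by
    intro a b c
    have t1 := ip_triple hstar₁ hsq₁ a.2 b.2 c.2
    set w : Z₁ := ipOp (a : H₁ →L[ℂ] H₁) (b : H₁ →L[ℂ] H₁) • c
        + ipOp (c : H₁ →L[ℂ] H₁) (b : H₁ →L[ℂ] H₁) • a
        - ipOp (a : H₁ →L[ℂ] H₁) (star (c : H₁ →L[ℂ] H₁)) • σ₁ b with hw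
    have hwcoe : (w : H₁ →L[ℂ] H₁) =
        (1/2 : ℂ) • ((a : H₁ →L[ℂ] H₁) * star (b : H₁ →L[ℂ] H₁) * (c : H₁ →L[ℂ] H₁) +
          (c : H₁ →L[ℂ] H₁) * star (b : H₁ →L[ℂ] H₁) * (a : H₁ →L[ℂ] H₁)) := by
      rw [t1, hw]
      push_cast [c1]
      rw [smul_sub, smul_add, smul_smul, smul_smul, smul_smul]
      have h12 : ∀ z : ℂ, 1/2 * (2*z) = z := fun z => by ring
      rw [h12, h12, h12]
    have h2 := hφ a b c w hwcoe
    have t2 := ip_triple hstar₂ hsq₂ (φ a).2 (φ b).2 (φ c).2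
    have hL : ((φ w : Z₂) : H₂ →L[ℂ] H₂)
        = ipOp (a : H₁ →L[ℂ] H₁) (b : H₁ →L[ℂ] H₁) • (φ c : H₂ →L[ℂ] H₂)
          + ipOp (c : H₁ →L[ℂ] H₁) (b : H₁ →L[ℂ] H₁) • (φ a : H₂ →L[ℂ] H₂)
          - ipOp (a : H₁ →L[ℂ] H₁) (star (c : H₁ →L[ℂ] H₁)) • (φ (σ₁ b) : H₂ →L[ℂ] H₂) := by
      rw [hw, map_sub, map_add, map_smul, map_smul, map_smul]
      push_cast
      ring_nf
    have hR : (1/2 : ℂ) • ((φ a : H₂ →L[ℂ] H₂) * star (φ b : H₂ →L[ℂ] H₂) * (φ c : H₂ →L[ℂ] H₂) +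
          (φ c : H₂ →L[ℂ] H₂) * star (φ b : H₂ →L[ℂ] H₂) * (φ a : H₂ →L[ℂ] H₂))
        = ipOp (φ a : H₂ →L[ℂ] H₂) (φ b : H₂ →L[ℂ] H₂) • (φ c : H₂ →L[ℂ] H₂)
          + ipOp (φ c : H₂ →L[ℂ] H₂) (φ b : H₂ →L[ℂ] H₂) • (φ a : H₂ →L[ℂ] H₂)
          - ipOp (φ a : H₂ →L[ℂ] H₂) (star (φ c : H₂ →L[ℂ] H₂)) • star (φ b : H₂ →L[ℂ] H₂) := by
      rw [t2]
      rw [smul_sub, smul_add, smul_smul, smul_smul, smul_smul]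
      have h12 : ∀ z : ℂ, 1/2 * (2*z) = z := fun z => by ring
      rw [h12, h12, h12]
    apply Subtype.coe_injective
    push_cast
    rw [← hL, h2, hR]
  -- the (‡) identity
  have hdag : ∀ a c : Z₁,
      ipOp (φ a : H₂ →L[ℂ] H₂) (star (φ c : H₂ →L[ℂ] H₂)) • k c
        = ipOp (φ a : H₂ →L[ℂ] H₂) (star (k c : H₂ →L[ℂ] H₂)) • φ c
          + (ipOp (φ c : H₂ →L[ℂ] H₂) (star (k c : H₂ →L[ℂ] H₂))
              - ipOp (c : H₁ →L[ℂ] H₁) (star (c : H₁ →L[ℂ] H₁))) • φ a := by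
    intro a c
    have E := Emaster a (σ₁ c) c
    rw [σ₁invol] at E
    have e1 : ((φ (σ₁ c) : Z₂) : H₂ →L[ℂ] H₂) = star ((k c : Z₂) : H₂ →L[ℂ] H₂) := by
      rw [hk]
      simp only [c2, star_star]
    have e2 : σ₂ (φ (σ₁ c)) = k c := rfl
    rw [e2, e1, c1] at E
    linear_combination (norm := module) E
  -- basic helpers
  have pull : ∀ (s t : ℂ) (u v : Z₁), s • φ u + t • φ v = 0 → s • u + t • v = 0 := by
    intro s t u v h
    apply hinj
    rw [map_add, map_smul, map_smul, map_zero]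
    exact h
  have φne : ∀ u : Z₁, u ≠ 0 → φ u ≠ 0 := by
    intro u hu h0
    exact hu (hinj (by rw [h0, map_zero]))
  have notline : ∀ (u v : Z₁), u ≠ 0 → (¬ ∃ t : ℂ, v = t • u) →
      ∀ s t : ℂ, s • u + t • v = 0 → s = 0 ∧ t = 0 := by
    intro u v hu hnl s t h
    by_cases ht : t = 0
    · subst ht
      rw [zero_smul, add_zero] at h
      rcases smul_eq_zero.1 h with h | h
      · exact ⟨h, rfl⟩
      · exact absurd h hu
    · exfalso
      apply hnl
      refine ⟨-(t⁻¹ * s), ?_⟩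
      have h2 : t • v = -(s • u) := eq_neg_of_add_eq_zero_right h
      calc v = t⁻¹ • (t • v) := by rw [smul_smul, inv_mul_cancel₀ ht, one_smul]
        _ = t⁻¹ • (-(s • u)) := by rw [h2]
        _ = (-(t⁻¹ * s)) • u := by module
  have exnotline : ∀ c : Z₁, ∃ a : Z₁, ¬ ∃ t : ℂ, a = t • c := by
    intro c
    by_contra hcon
    push_neg at hcon
    by_cases hc : c = 0
    · have hsub : Subsingleton Z₁ := by
        refine ⟨fun a b => ?_⟩
        obtain ⟨t, ht⟩ := hcon a
        obtain ⟨s, hs⟩ := hcon b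
        rw [ht, hs, hc, smul_zero, smul_zero]
      have h0 : Module.finrank ℂ Z₁ = 0 := Module.finrank_zero_of_subsingleton
      omega
    · have hmem : ∀ a : Z₁, a ∈ Submodule.span ℂ ({c} : Set Z₁) := by
        intro a
        obtain ⟨t, ht⟩ := hcon a
        exact Submodule.mem_span_singleton.2 ⟨t, ht.symm⟩
      have htop : Submodule.span ℂ ({c} : Set Z₁) = ⊤ := eq_top_iff.2 (fun a _ => hmem a)
      have h1 : Module.finrank ℂ (Submodule.span ℂ ({c} : Set Z₁)) = 1 :=
        finrank_span_singleton hc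
      rw [htop, finrank_top] at h1
      omega
  obtain ⟨a₀, ha₀⟩ : ∃ a : Z₁, a ≠ 0 := by
    obtain ⟨a, ha⟩ := exnotline 0
    refine ⟨a, fun h => ha ⟨0, ?_⟩⟩
    rw [h, zero_smul]
  obtain ⟨v₀, hv₀ne, hv₀sa⟩ : ∃ v : Z₁, v ≠ 0 ∧ σ₁ v = v := by
    by_cases h : a₀ + σ₁ a₀ = 0
    · refine ⟨Complex.I • a₀, smul_ne_zero Complex.I_ne_zero ha₀, ?_⟩
      have hs : σ₁ a₀ = -a₀ := by
        rw [← neg_eq_of_add_eq_zero_right h]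
      rw [σ₁smul, hs]
      simp [Complex.conj_I]
    · refine ⟨a₀ + σ₁ a₀, h, ?_⟩
      rw [σ₁add, σ₁invol, add_comm]
  have coe_ne : ∀ u : Z₁, u ≠ 0 → (u : H₁ →L[ℂ] H₁) ≠ 0 := by
    intro u hu h
    exact hu (Subtype.ext h)
  have coe_ne₂ : ∀ u : Z₂, u ≠ 0 → (u : H₂ →L[ℂ] H₂) ≠ 0 := by
    intro u hu h
    exact hu (Subtype.ext h)
  have hip_self₁ : ∀ u : Z₁, u ≠ 0 → ipOp (u : H₁ →L[ℂ] H₁) (u : H₁ →L[ℂ] H₁) ≠ 0 := by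
    intro u hu h
    exact coe_ne u hu (ip_self_zero hstar₁ hsq₁ u.2 h)
  have hBv₀ : ipOp (v₀ : H₁ →L[ℂ] H₁) (star (v₀ : H₁ →L[ℂ] H₁)) ≠ 0 := by
    have : star (v₀ : H₁ →L[ℂ] H₁) = (v₀ : H₁ →L[ℂ] H₁) := by
      rw [← c1, hv₀sa]
    rw [this]
    exact hip_self₁ v₀ hv₀ne
  -- bilinear expansion in Z₂
  have hBexp₂ : ∀ u v : Z₂, ipOp ((u : H₂ →L[ℂ] H₂) + (v : H₂ →L[ℂ] H₂))
      (star ((u : H₂ →L[ℂ] H₂) + (v : H₂ →L[ℂ] H₂)))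
      = ipOp (u : H₂ →L[ℂ] H₂) (star (u : H₂ →L[ℂ] H₂))
        + 2 * ipOp (u : H₂ →L[ℂ] H₂) (star (v : H₂ →L[ℂ] H₂))
        + ipOp (v : H₂ →L[ℂ] H₂) (star (v : H₂ →L[ℂ] H₂)) := by
    intro u v
    rw [ip_add_left hstar₂ hsq₂ u.2 v.2 (hstar₂ _ (Z₂.add_mem u.2 v.2))]
    rw [star_add]
    rw [ip_add_right hstar₂ hsq₂ u.2 (hstar₂ _ u.2) (hstar₂ _ v.2)]
    rw [ip_add_right hstar₂ hsq₂ v.2 (hstar₂ _ u.2) (hstar₂ _ v.2)]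
    rw [ip_bsymm hstar₂ hsq₂ v.2 u.2]
    ring
  have hBexp₁ : ∀ u v : Z₁, ipOp ((u : H₁ →L[ℂ] H₁) + (v : H₁ →L[ℂ] H₁))
      (star ((u : H₁ →L[ℂ] H₁) + (v : H₁ →L[ℂ] H₁)))
      = ipOp (u : H₁ →L[ℂ] H₁) (star (u : H₁ →L[ℂ] H₁))
        + 2 * ipOp (u : H₁ →L[ℂ] H₁) (star (v : H₁ →L[ℂ] H₁))
        + ipOp (v : H₁ →L[ℂ] H₁) (star (v : H₁ →L[ℂ] H₁)) := by
    intro u v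
    rw [ip_add_left hstar₁ hsq₁ u.2 v.2 (hstar₁ _ (Z₁.add_mem u.2 v.2))]
    rw [star_add]
    rw [ip_add_right hstar₁ hsq₁ u.2 (hstar₁ _ u.2) (hstar₁ _ v.2)]
    rw [ip_add_right hstar₁ hsq₁ v.2 (hstar₁ _ u.2) (hstar₁ _ v.2)]
    rw [ip_bsymm hstar₁ hsq₁ v.2 u.2]
    ring
  have coeadd₂ : ∀ x y : Z₁, ((φ (x + y) : Z₂) : H₂ →L[ℂ] H₂)
      = (φ x : H₂ →L[ℂ] H₂) + (φ y : H₂ →L[ℂ] H₂) := by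
    intro x y
    rw [map_add]
    push_cast
    abel
  -- existence of c0 with Q c0 ≠ 0
  obtain ⟨c0, hQc0⟩ : ∃ c : Z₁,
      ipOp (φ c : H₂ →L[ℂ] H₂) (star (φ c : H₂ →L[ℂ] H₂)) ≠ 0 := by
    by_contra hcon
    push_neg at hcon
    have hpol : ∀ a c : Z₁, ipOp (φ a : H₂ →L[ℂ] H₂) (star (φ c : H₂ →L[ℂ] H₂)) = 0 := by
      intro a c
      have h1 := hcon (a + c)
      rw [coeadd₂, hBexp₂ (φ a) (φ c), hcon a, hcon c] at h1
      have : (2:ℂ) * ipOp (φ a : H₂ →L[ℂ] H₂) (star (φ c : H₂ →L[ℂ] H₂)) = 0 := by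
        linear_combination h1
      exact (mul_eq_zero.1 this).resolve_left two_ne_zero
    -- show B₁(c,c) = 0 for all c, contradict hBv₀
    obtain ⟨a', ha'⟩ := exnotline v₀
    have step : ∀ a : Z₁, (¬ ∃ t : ℂ, a = t • v₀) →
        ipOp (φ a : H₂ →L[ℂ] H₂) (star (k v₀ : H₂ →L[ℂ] H₂)) = 0 ∧
          ipOp (φ v₀ : H₂ →L[ℂ] H₂) (star (k v₀ : H₂ →L[ℂ] H₂))
            - ipOp (v₀ : H₁ →L[ℂ] H₁) (star (v₀ : H₁ →L[ℂ] H₁)) = 0 := by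
      intro a ha
      have d := hdag a v₀
      rw [hpol a v₀, zero_smul] at d
      have d2 : ipOp (φ a : H₂ →L[ℂ] H₂) (star (k v₀ : H₂ →L[ℂ] H₂)) • v₀
          + (ipOp (φ v₀ : H₂ →L[ℂ] H₂) (star (k v₀ : H₂ →L[ℂ] H₂))
              - ipOp (v₀ : H₁ →L[ℂ] H₁) (star (v₀ : H₁ →L[ℂ] H₁))) • a = 0 := by
        apply pull
        rw [← d]
      have := notline v₀ a hv₀ne ha _ _ d2
      exact ⟨this.1, this.2⟩
    have hsum : ¬ ∃ t : ℂ, (v₀ + a') = t • v₀ := by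
      rintro ⟨t, ht⟩
      refine ha' ⟨t - 1, ?_⟩
      have h5 : a' = t • v₀ - v₀ := by rw [← ht]; abel
      rw [h5]
      module
    have e1 := (step a' ha').1
    have e2 := (step (v₀ + a') hsum).1
    have e3 := (step a' ha').2
    -- ipOp (φ v₀) (star k v₀) = e2 - e1 = 0
    have e4 : ipOp (φ v₀ : H₂ →L[ℂ] H₂) (star (k v₀ : H₂ →L[ℂ] H₂)) = 0 := by
      have hexp : ipOp (φ (v₀ + a') : H₂ →L[ℂ] H₂) (star (k v₀ : H₂ →L[ℂ] H₂))
          = ipOp (φ v₀ : H₂ →L[ℂ] H₂) (star (k v₀ : H₂ →L[ℂ] H₂))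
            + ipOp (φ a' : H₂ →L[ℂ] H₂) (star (k v₀ : H₂ →L[ℂ] H₂)) := by
        rw [coeadd₂]
        exact ip_add_left hstar₂ hsq₂ (φ v₀).2 (φ a').2 (hstar₂ _ (k v₀).2)
      rw [e2, e1, add_zero] at hexp
      exact hexp.symm
    rw [e4, zero_sub, neg_eq_zero] at e3
    exact hBv₀ e3
  -- smul helpers for ipOp on Z₂
  have coesmul₂ : ∀ (t : ℂ) (x : Z₁), ((φ (t • x) : Z₂) : H₂ →L[ℂ] H₂)
      = t • (φ x : H₂ →L[ℂ] H₂) := by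
    intro t x
    rw [map_smul]
    push_cast
    rfl
  have ipsmulL₂ : ∀ (t : ℂ) (u v : Z₂), ipOp (t • (u : H₂ →L[ℂ] H₂)) (star (v : H₂ →L[ℂ] H₂))
      = t * ipOp (u : H₂ →L[ℂ] H₂) (star (v : H₂ →L[ℂ] H₂)) := by
    intro t u v
    exact ip_smul_left hstar₂ hsq₂ t u.2 (hstar₂ _ v.2)
  have ipsmulR₂ : ∀ (t : ℂ) (u v : Z₂), ipOp ((u : H₂ →L[ℂ] H₂)) (star (t • (v : H₂ →L[ℂ] H₂)))
      = t * ipOp (u : H₂ →L[ℂ] H₂) (star (v : H₂ →L[ℂ] H₂)) := by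
    intro t u v
    rw [star_smul]
    rw [ip_smul_right hstar₂ hsq₂ (star t) u.2 (hstar₂ _ v.2)]
    rw [Complex.star_def, Complex.conj_conj]
  have ipsmulLR₂ : ∀ (t : ℂ) (u w : Z₂), ipOp (t • (u : H₂ →L[ℂ] H₂)) (star (t • (w : H₂ →L[ℂ] H₂)))
      = t * (t * ipOp (u : H₂ →L[ℂ] H₂) (star (w : H₂ →L[ℂ] H₂))) := by
    intro t u w
    rw [ip_smul_left hstar₂ hsq₂ t u.2 (hstar₂ _ (Z₂.smul_mem t w.2))]
    rw [ipsmulR₂]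
  have ipsmulR₁ : ∀ (t : ℂ) (u v : Z₁), ipOp ((u : H₁ →L[ℂ] H₁)) (star (t • (v : H₁ →L[ℂ] H₁)))
      = t * ipOp (u : H₁ →L[ℂ] H₁) (star (v : H₁ →L[ℂ] H₁)) := by
    intro t u v
    rw [star_smul]
    rw [ip_smul_right hstar₁ hsq₁ (star t) u.2 (hstar₁ _ v.2)]
    rw [Complex.star_def, Complex.conj_conj]
  have ipsmulLR₁ : ∀ (t : ℂ) (u w : Z₁), ipOp (t • (u : H₁ →L[ℂ] H₁)) (star (t • (w : H₁ →L[ℂ] H₁)))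
      = t * (t * ipOp (u : H₁ →L[ℂ] H₁) (star (w : H₁ →L[ℂ] H₁))) := by
    intro t u w
    rw [ip_smul_left hstar₁ hsq₁ t u.2 (hstar₁ _ (Z₁.smul_mem t w.2))]
    rw [ipsmulR₁]
  -- k is linear
  have σ₂add : ∀ x y : Z₂, σ₂ (x + y) = σ₂ x + σ₂ y := fun x y =>
    Subtype.ext (by push_cast [c2]; rw [star_add])
  have kadd : ∀ x y : Z₁, k (x + y) = k x + k y := by
    intro x y
    simp only [hk]
    rw [σ₁add, map_add, σ₂add]
  have ksmul : ∀ (t : ℂ) (x : Z₁), k (t • x) = t • k x := by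
    intro t x
    simp only [hk]
    rw [σ₁smul, map_smul, σ₂smul, Complex.conj_conj]
  have kzero : k 0 = 0 := by
    have h00 : k 0 + k 0 = k 0 := by rw [← kadd, add_zero]
    exact add_eq_left.1 h00
  -- proportionality at points with Q ≠ 0
  have HQ : ∀ c : Z₁, ipOp (φ c : H₂ →L[ℂ] H₂) (star (φ c : H₂ →L[ℂ] H₂)) ≠ 0 →
      ∃ ρ : ℂ, k c = ρ • φ c := by
    intro c hQ
    have d := hdag c c
    refine ⟨(ipOp (φ c : H₂ →L[ℂ] H₂) (star (φ c : H₂ →L[ℂ] H₂)))⁻¹ *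
      (ipOp (φ c : H₂ →L[ℂ] H₂) (star (k c : H₂ →L[ℂ] H₂)) +
        (ipOp (φ c : H₂ →L[ℂ] H₂) (star (k c : H₂ →L[ℂ] H₂))
          - ipOp (c : H₁ →L[ℂ] H₁) (star (c : H₁ →L[ℂ] H₁)))), ?_⟩
    have h2 := congrArg (fun z => (ipOp (φ c : H₂ →L[ℂ] H₂) (star (φ c : H₂ →L[ℂ] H₂)))⁻¹ • z) d
    rw [smul_smul, inv_mul_cancel₀ hQ, one_smul] at h2
    refine h2.trans ?_
    module
  have hc0ne : c0 ≠ 0 := by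
    intro h
    apply hQc0
    rw [h, map_zero]
    rw [show ((0 : Z₂) : H₂ →L[ℂ] H₂) = 0 from rfl]
    exact ip_zero_left
  -- pointwise proportionality everywhere
  have Hpt : ∀ v : Z₁, ∃ ρ : ℂ, k v = ρ • φ v := by
    intro v
    by_cases hv : v = 0
    · exact ⟨0, by rw [hv, kzero, map_zero, zero_smul]⟩
    by_cases hQ : ipOp (φ v : H₂ →L[ℂ] H₂) (star (φ v : H₂ →L[ℂ] H₂)) ≠ 0
    · exact HQ v hQ
    push_neg at hQ
    -- v not on the line of c0
    have hvline : ¬ ∃ t : ℂ, v = t • c0 := by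
      rintro ⟨t, rfl⟩
      apply hv
      have ht : t ≠ 0 → False := by
        intro htne
        apply htne
        have e1 : ipOp (φ (t • c0) : H₂ →L[ℂ] H₂) (star (φ (t • c0) : H₂ →L[ℂ] H₂))
            = (t * t) * ipOp (φ c0 : H₂ →L[ℂ] H₂) (star (φ c0 : H₂ →L[ℂ] H₂)) := by
          rw [coesmul₂, ipsmulLR₂]
          ring
        rw [hQ] at e1
        rcases mul_eq_zero.1 e1.symm with h | h
        · rcases mul_eq_zero.1 h with h' | h' <;> exact h'
        · exact absurd h hQc0
      by_cases htz : t = 0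
      · rw [htz, zero_smul]
      · exact absurd htz (fun hh => ht hh)
    -- the line trick
    set Bc := ipOp (φ c0 : H₂ →L[ℂ] H₂) (star (φ v : H₂ →L[ℂ] H₂)) with hBc
    have hS : ∀ t : ℂ, ipOp (φ (c0 + t • v) : H₂ →L[ℂ] H₂) (star (φ (c0 + t • v) : H₂ →L[ℂ] H₂))
        = ipOp (φ c0 : H₂ →L[ℂ] H₂) (star (φ c0 : H₂ →L[ℂ] H₂)) + (2 * t) * Bc := by
      intro t
      have e0 : ((φ (c0 + t • v) : Z₂) : H₂ →L[ℂ] H₂)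
          = (φ c0 : H₂ →L[ℂ] H₂) + ((t • φ v : Z₂) : H₂ →L[ℂ] H₂) := by
        rw [map_add, map_smul]
        push_cast
        rfl
      rw [e0, hBexp₂ (φ c0) (t • φ v)]
      rw [show ((t • φ v : Z₂) : H₂ →L[ℂ] H₂) = t • (φ v : H₂ →L[ℂ] H₂) from rfl]
      rw [ipsmulR₂, ipsmulLR₂, hQ]
      ring
    have key : ∀ t₁ t₂ : ℂ,
        ipOp (φ (c0 + t₁ • v) : H₂ →L[ℂ] H₂) (star (φ (c0 + t₁ • v) : H₂ →L[ℂ] H₂)) = 0 →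
        ipOp (φ (c0 + t₂ • v) : H₂ →L[ℂ] H₂) (star (φ (c0 + t₂ • v) : H₂ →L[ℂ] H₂)) = 0 →
        t₁ = t₂ := by
      intro t₁ t₂ h₁ h₂
      rw [hS t₁] at h₁
      rw [hS t₂] at h₂
      have hBne : Bc ≠ 0 := by
        intro hB0
        rw [hB0, mul_zero, add_zero] at h₁
        exact hQc0 h₁
      have h3 : (2 * (t₁ - t₂)) * Bc = 0 := by linear_combination h₁ - h₂
      rcases mul_eq_zero.1 h3 with h | h
      · rcases mul_eq_zero.1 h with h' | h'
        · exact absurd h' two_ne_zero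
        · exact sub_eq_zero.1 h'
      · exact absurd h hBne
    have hgood : ∃ t₁ t₂ : ℂ, t₁ ≠ 0 ∧ t₂ ≠ 0 ∧ t₁ ≠ t₂ ∧
        ipOp (φ (c0 + t₁ • v) : H₂ →L[ℂ] H₂) (star (φ (c0 + t₁ • v) : H₂ →L[ℂ] H₂)) ≠ 0 ∧
        ipOp (φ (c0 + t₂ • v) : H₂ →L[ℂ] H₂) (star (φ (c0 + t₂ • v) : H₂ →L[ℂ] H₂)) ≠ 0 := by
      by_cases h1 : ipOp (φ (c0 + (1:ℂ) • v) : H₂ →L[ℂ] H₂)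
          (star (φ (c0 + (1:ℂ) • v) : H₂ →L[ℂ] H₂)) = 0
      · refine ⟨2, 3, two_ne_zero, by norm_num, by norm_num, ?_, ?_⟩
        · intro h2
          have := key 1 2 h1 h2
          norm_num at this
        · intro h3
          have := key 1 3 h1 h3
          norm_num at this
      · by_cases h2 : ipOp (φ (c0 + (2:ℂ) • v) : H₂ →L[ℂ] H₂)
            (star (φ (c0 + (2:ℂ) • v) : H₂ →L[ℂ] H₂)) = 0
        · refine ⟨1, 3, one_ne_zero, by norm_num, by norm_num, h1, ?_⟩
          intro h3
          have := key 2 3 h2 h3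
          norm_num at this
        · exact ⟨1, 2, one_ne_zero, two_ne_zero, by norm_num, h1, h2⟩
    obtain ⟨t₁, t₂, ht₁, ht₂, ht₁₂, hS₁, hS₂⟩ := hgood
    obtain ⟨ρ₁, hρ₁⟩ := HQ _ hS₁
    obtain ⟨ρ₂, hρ₂⟩ := HQ _ hS₂
    obtain ⟨lam0, hlam0⟩ := HQ c0 hQc0
    have hE : ∀ (t : ℂ) (ρ : ℂ), k (c0 + t • v) = ρ • φ (c0 + t • v) →
        t • k v = (ρ - lam0) • φ c0 + (ρ * t) • φ v := by
      intro t ρ h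
      have h2 : k c0 + t • k v = ρ • (φ c0 + t • φ v) := by
        rw [← ksmul, ← kadd, h, map_add, map_smul]
      rw [hlam0] at h2
      linear_combination (norm := module) h2
    have e1 := hE t₁ ρ₁ hρ₁
    have e2 := hE t₂ ρ₂ hρ₂
    have finv : ∀ (t ρ : ℂ), t ≠ 0 → t • k v = (ρ - lam0) • φ c0 + (ρ * t) • φ v →
        k v = (t⁻¹ * (ρ - lam0)) • φ c0 + ρ • φ v := by
      intro t ρ ht he
      have h5 : k v = t⁻¹ • (t • k v) := by
        rw [smul_smul, inv_mul_cancel₀ ht, one_smul]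
      have hmul : t⁻¹ * (ρ * t) = ρ := by
        rw [mul_comm ρ t, ← mul_assoc, inv_mul_cancel₀ ht, one_mul]
      rw [h5, he, smul_add, smul_smul, smul_smul, hmul]
    have f1 := finv t₁ ρ₁ ht₁ e1
    have f2 := finv t₂ ρ₂ ht₂ e2
    have f3 : ((t₁⁻¹ * (ρ₁ - lam0)) - (t₂⁻¹ * (ρ₂ - lam0))) • c0 + (ρ₁ - ρ₂) • v = 0 := by
      apply pull
      linear_combination (norm := module) f2 - f1
    obtain ⟨g1, g2⟩ := notline c0 v hc0ne hvline _ _ f3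
    have hρeq : ρ₁ = ρ₂ := sub_eq_zero.1 g2
    have hinvne : t₁⁻¹ ≠ t₂⁻¹ := fun h => ht₁₂ (by rw [← inv_inv t₁, h, inv_inv])
    have hρlam : ρ₁ = lam0 := by
      have h6 : (ρ₁ - lam0) * (t₁⁻¹ - t₂⁻¹) = 0 := by
        rw [← hρeq] at g1
        linear_combination g1
      rcases mul_eq_zero.1 h6 with h | h
      · exact sub_eq_zero.1 h
      · exact absurd (sub_eq_zero.1 h) hinvne
    refine ⟨lam0, ?_⟩
    rw [hρlam] at f1
    rw [f1, sub_self, mul_zero, zero_smul, zero_add]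
  -- global proportionality
  obtain ⟨lam, hlamc0⟩ := HQ c0 hQc0
  have hklam : ∀ v : Z₁, k v = lam • φ v := by
    intro v
    by_cases hline : ∃ t : ℂ, v = t • c0
    · obtain ⟨t, rfl⟩ := hline
      rw [ksmul, hlamc0, map_smul, smul_smul, smul_smul, mul_comm]
    · obtain ⟨ρv, hρv⟩ := Hpt v
      obtain ⟨ρs, hρs⟩ := Hpt (v + c0)
      have h2 : ρv • φ v + lam • φ c0 = ρs • φ v + ρs • φ c0 := by
        calc ρv • φ v + lam • φ c0 = k v + k c0 := by rw [hρv, hlamc0]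
          _ = k (v + c0) := (kadd v c0).symm
          _ = ρs • φ (v + c0) := hρs
          _ = ρs • φ v + ρs • φ c0 := by rw [map_add, smul_add]
      have f3 : (ρs - lam) • c0 + (ρs - ρv) • v = 0 := by
        apply pull
        linear_combination (norm := module) -h2
      obtain ⟨g1, g2⟩ := notline c0 v hc0ne hline _ _ f3
      have hρv_lam : ρv = lam := by
        have e1 := sub_eq_zero.1 g1
        have e2 := sub_eq_zero.1 g2
        rw [← e2, e1]
      rw [hρv, hρv_lam]
  have hlamne : lam ≠ 0 := by
    intro h0
    have h1 : k c0 = 0 := by rw [hlamc0, h0, zero_smul]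
    have hσ₂0 : σ₂ 0 = 0 := Subtype.ext (by rw [c2]; push_cast; rw [star_zero])
    have hσ₁0 : σ₁ 0 = 0 := Subtype.ext (by rw [c1]; push_cast; rw [star_zero])
    have h2 : φ (σ₁ c0) = 0 := by
      have h1' : σ₂ (φ (σ₁ c0)) = 0 := h1
      calc φ (σ₁ c0) = σ₂ (σ₂ (φ (σ₁ c0))) := (σ₂invol _).symm
        _ = σ₂ 0 := by rw [h1']
        _ = 0 := hσ₂0
    have h3 : σ₁ c0 = 0 := hinj (by rw [h2, map_zero])
    have h4 : c0 = 0 := by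
      calc c0 = σ₁ (σ₁ c0) := (σ₁invol _).symm
        _ = σ₁ 0 := by rw [h3]
        _ = 0 := hσ₁0
    exact hc0ne h4
  -- lam * Q = B₁ on the diagonal
  have hbeta : ∀ c : Z₁, lam * ipOp (φ c : H₂ →L[ℂ] H₂) (star (φ c : H₂ →L[ℂ] H₂))
      = ipOp (c : H₁ →L[ℂ] H₁) (star (c : H₁ →L[ℂ] H₁)) := by
    intro c
    have d := hdag a₀ c
    rw [hklam c] at d
    rw [show ((lam • φ c : Z₂) : H₂ →L[ℂ] H₂) = lam • (φ c : H₂ →L[ℂ] H₂) from rfl] at d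
    rw [ipsmulR₂, ipsmulR₂] at d
    have e : (lam * ipOp (φ c : H₂ →L[ℂ] H₂) (star (φ c : H₂ →L[ℂ] H₂))
        - ipOp (c : H₁ →L[ℂ] H₁) (star (c : H₁ →L[ℂ] H₁))) • φ a₀ = 0 := by
      linear_combination (norm := module) -d
    rcases smul_eq_zero.1 e with h | h
    · exact sub_eq_zero.1 h
    · exact absurd h (φne a₀ ha₀)
  -- polarization
  have hBlam : ∀ a c : Z₁, lam * ipOp (φ a : H₂ →L[ℂ] H₂) (star (φ c : H₂ →L[ℂ] H₂))
      = ipOp (a : H₁ →L[ℂ] H₁) (star (c : H₁ →L[ℂ] H₁)) := by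
    intro a c
    have h1 := hbeta (a + c)
    rw [coeadd₂, hBexp₂ (φ a) (φ c)] at h1
    rw [show ((a + c : Z₁) : H₁ →L[ℂ] H₁) = (a : H₁ →L[ℂ] H₁) + (c : H₁ →L[ℂ] H₁) from by
      push_cast; rfl] at h1
    rw [hBexp₁ a c] at h1
    have h2 := hbeta a
    have h3 := hbeta c
    have h4 : 2 * (lam * ipOp (φ a : H₂ →L[ℂ] H₂) (star (φ c : H₂ →L[ℂ] H₂)))
        = 2 * ipOp (a : H₁ →L[ℂ] H₁) (star (c : H₁ →L[ℂ] H₁)) := by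
      linear_combination h1 - h2 - h3
    exact mul_left_cancel₀ two_ne_zero h4
  -- the isometry property on non-isotropic vectors
  have main : ∀ a : Z₁, ipOp (a : H₁ →L[ℂ] H₁) (star (a : H₁ →L[ℂ] H₁)) ≠ 0 →
      ∀ b : Z₁, ipOp (φ a : H₂ →L[ℂ] H₂) (φ b : H₂ →L[ℂ] H₂)
        = ipOp (a : H₁ →L[ℂ] H₁) (b : H₁ →L[ℂ] H₁) := by
    intro a ha b
    obtain ⟨u, hu⟩ := exnotline a
    set s : ℂ := ipOp (a : H₁ →L[ℂ] H₁) (star (u : H₁ →L[ℂ] H₁)) /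
      ipOp (a : H₁ →L[ℂ] H₁) (star (a : H₁ →L[ℂ] H₁)) with hs
    set cc : Z₁ := u - s • a with hcc
    have hane : a ≠ 0 := by
      intro h
      apply ha
      rw [h]
      rw [show ((0 : Z₁) : H₁ →L[ℂ] H₁) = 0 from rfl]
      rw [show star (0 : H₁ →L[ℂ] H₁) = 0 from star_zero _]
      exact ip_zero_left
    have hccline : ¬ ∃ t : ℂ, cc = t • a := by
      rintro ⟨t, ht⟩
      apply hu
      refine ⟨t + s, ?_⟩
      have h5 : u = cc + s • a := by rw [hcc]; abel
      rw [h5, ht]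
      module
    have hu2 : (u : H₁ →L[ℂ] H₁) = (cc : H₁ →L[ℂ] H₁) + s • (a : H₁ →L[ℂ] H₁) := by
      rw [hcc]
      push_cast
      abel
    have hBac : ipOp (a : H₁ →L[ℂ] H₁) (star (cc : H₁ →L[ℂ] H₁)) = 0 := by
      have e5 : ipOp (a : H₁ →L[ℂ] H₁) (star ((cc : H₁ →L[ℂ] H₁) + s • (a : H₁ →L[ℂ] H₁)))
          = ipOp (a : H₁ →L[ℂ] H₁) (star (cc : H₁ →L[ℂ] H₁))
            + s * ipOp (a : H₁ →L[ℂ] H₁) (star (a : H₁ →L[ℂ] H₁)) := by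
        rw [star_add]
        rw [ip_add_right hstar₁ hsq₁ a.2 (hstar₁ _ cc.2) (hstar₁ _ (Z₁.smul_mem s a.2))]
        rw [ipsmulR₁]
      rw [← hu2] at e5
      have e6 : ipOp (a : H₁ →L[ℂ] H₁) (star (cc : H₁ →L[ℂ] H₁))
          = ipOp (a : H₁ →L[ℂ] H₁) (star (u : H₁ →L[ℂ] H₁))
            - s * ipOp (a : H₁ →L[ℂ] H₁) (star (a : H₁ →L[ℂ] H₁)) := by
        linear_combination -e5
      rw [e6, hs, div_mul_cancel₀ _ ha, sub_self]
    have hBφac : ipOp (φ a : H₂ →L[ℂ] H₂) (star (φ cc : H₂ →L[ℂ] H₂)) = 0 := by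
      have h6 := hBlam a cc
      rw [hBac] at h6
      exact (mul_eq_zero.1 h6).resolve_left hlamne
    have E := Emaster a b cc
    have hphis : φ (σ₁ b) = (starRingEnd ℂ) lam • σ₂ (φ b) := by
      have h7 : σ₂ (k b) = φ (σ₁ b) := σ₂invol _
      rw [← h7, hklam b, σ₂smul]
    rw [hphis, hBac, hBφac, zero_smul, zero_smul, sub_zero, sub_zero] at E
    have E2 : (ipOp (cc : H₁ →L[ℂ] H₁) (b : H₁ →L[ℂ] H₁)
          - ipOp (φ cc : H₂ →L[ℂ] H₂) (φ b : H₂ →L[ℂ] H₂)) • a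
        + (ipOp (a : H₁ →L[ℂ] H₁) (b : H₁ →L[ℂ] H₁)
          - ipOp (φ a : H₂ →L[ℂ] H₂) (φ b : H₂ →L[ℂ] H₂)) • cc = 0 := by
      apply pull
      linear_combination (norm := module) E
    have h8 := notline a cc hane hccline _ _ E2
    exact (sub_eq_zero.1 h8.2).symm
  -- full isometry
  have hg : ∀ x b : Z₁, ipOp (φ x : H₂ →L[ℂ] H₂) (φ b : H₂ →L[ℂ] H₂)
      = ipOp (x : H₁ →L[ℂ] H₁) (b : H₁ →L[ℂ] H₁) := by
    intro x b
    by_cases hx : ipOp (x : H₁ →L[ℂ] H₁) (star (x : H₁ →L[ℂ] H₁)) ≠ 0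
    · exact main x hx b
    push_neg at hx
    have hexp : ∀ t : ℂ, ipOp ((x + t • v₀ : Z₁) : H₁ →L[ℂ] H₁) (star ((x + t • v₀ : Z₁) : H₁ →L[ℂ] H₁))
        = 2 * t * ipOp (x : H₁ →L[ℂ] H₁) (star (v₀ : H₁ →L[ℂ] H₁))
          + t * t * ipOp (v₀ : H₁ →L[ℂ] H₁) (star (v₀ : H₁ →L[ℂ] H₁)) := by
      intro t
      rw [show ((x + t • v₀ : Z₁) : H₁ →L[ℂ] H₁)
          = (x : H₁ →L[ℂ] H₁) + ((t • v₀ : Z₁) : H₁ →L[ℂ] H₁) from by push_cast; rfl]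
      rw [hBexp₁ x (t • v₀)]
      rw [show ((t • v₀ : Z₁) : H₁ →L[ℂ] H₁) = t • (v₀ : H₁ →L[ℂ] H₁) from rfl]
      rw [ipsmulR₁, ipsmulLR₁, hx]
      ring
    have hsel : ∃ t : ℂ, t ≠ 0 ∧
        ipOp ((x + t • v₀ : Z₁) : H₁ →L[ℂ] H₁) (star ((x + t • v₀ : Z₁) : H₁ →L[ℂ] H₁)) ≠ 0 := by
      by_cases h1 : 2 * ipOp (x : H₁ →L[ℂ] H₁) (star (v₀ : H₁ →L[ℂ] H₁))
          + ipOp (v₀ : H₁ →L[ℂ] H₁) (star (v₀ : H₁ →L[ℂ] H₁)) = 0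
      · refine ⟨2, two_ne_zero, ?_⟩
        rw [hexp 2]
        intro h2
        apply hBv₀
        linear_combination h2/2 - h1
      · refine ⟨1, one_ne_zero, ?_⟩
        rw [hexp 1]
        intro h2
        apply h1
        linear_combination h2
    obtain ⟨t, ht0, htN⟩ := hsel
    have h1 := main _ htN b
    have h2 := main v₀ hBv₀ b
    have e1 : ipOp ((x + t • v₀ : Z₁) : H₁ →L[ℂ] H₁) (b : H₁ →L[ℂ] H₁)
        = ipOp (x : H₁ →L[ℂ] H₁) (b : H₁ →L[ℂ] H₁)
          + t * ipOp (v₀ : H₁ →L[ℂ] H₁) (b : H₁ →L[ℂ] H₁) := by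
      rw [show ((x + t • v₀ : Z₁) : H₁ →L[ℂ] H₁)
          = (x : H₁ →L[ℂ] H₁) + t • (v₀ : H₁ →L[ℂ] H₁) from by push_cast; rfl]
      rw [ip_add_left hstar₁ hsq₁ x.2 (Z₁.smul_mem t v₀.2) b.2]
      rw [ip_smul_left hstar₁ hsq₁ t v₀.2 b.2]
    have e2 : ipOp (φ (x + t • v₀) : H₂ →L[ℂ] H₂) (φ b : H₂ →L[ℂ] H₂)
        = ipOp (φ x : H₂ →L[ℂ] H₂) (φ b : H₂ →L[ℂ] H₂)
          + t * ipOp (φ v₀ : H₂ →L[ℂ] H₂) (φ b : H₂ →L[ℂ] H₂) := by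
      rw [show ((φ (x + t • v₀) : Z₂) : H₂ →L[ℂ] H₂)
          = (φ x : H₂ →L[ℂ] H₂) + t • (φ v₀ : H₂ →L[ℂ] H₂) from by
        rw [map_add, map_smul]; push_cast; rfl]
      rw [ip_add_left hstar₂ hsq₂ (φ x).2 (Z₂.smul_mem t (φ v₀).2) (φ b).2]
      rw [ip_smul_left hstar₂ hsq₂ t (φ v₀).2 (φ b).2]
    have h9 : ipOp (φ x : H₂ →L[ℂ] H₂) (φ b : H₂ →L[ℂ] H₂)
          + t * ipOp (φ v₀ : H₂ →L[ℂ] H₂) (φ b : H₂ →L[ℂ] H₂)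
        = ipOp (x : H₁ →L[ℂ] H₁) (b : H₁ →L[ℂ] H₁)
          + t * ipOp (v₀ : H₁ →L[ℂ] H₁) (b : H₁ →L[ℂ] H₁) := by
      rw [← e1, ← e2, h1]
    rw [h2] at h9
    linear_combination h9
  -- unimodularity of lam
  have hv₀ip : ipOp (v₀ : H₁ →L[ℂ] H₁) (v₀ : H₁ →L[ℂ] H₁) ≠ 0 := hip_self₁ v₀ hv₀ne
  have w1 : ipOp ((k v₀ : Z₂) : H₂ →L[ℂ] H₂) ((k v₀ : Z₂) : H₂ →L[ℂ] H₂)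
      = (lam * (starRingEnd ℂ) lam) * ipOp (φ v₀ : H₂ →L[ℂ] H₂) (φ v₀ : H₂ →L[ℂ] H₂) := by
    rw [hklam v₀]
    rw [show ((lam • φ v₀ : Z₂) : H₂ →L[ℂ] H₂) = lam • (φ v₀ : H₂ →L[ℂ] H₂) from rfl]
    rw [ip_smul_left hstar₂ hsq₂ lam (φ v₀).2 (Z₂.smul_mem lam (φ v₀).2)]
    rw [ip_smul_right hstar₂ hsq₂ lam (φ v₀).2 (φ v₀).2]
    ring
  have w2 : ipOp ((k v₀ : Z₂) : H₂ →L[ℂ] H₂) ((k v₀ : Z₂) : H₂ →L[ℂ] H₂)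
      = ipOp (v₀ : H₁ →L[ℂ] H₁) (v₀ : H₁ →L[ℂ] H₁) := by
    have hco : ((k v₀ : Z₂) : H₂ →L[ℂ] H₂) = star ((φ (σ₁ v₀) : Z₂) : H₂ →L[ℂ] H₂) := by
      simp only [hk, c2]
    rw [hco, ip_star_star hstar₂ hsq₂ (φ (σ₁ v₀)).2 (φ (σ₁ v₀)).2]
    rw [hg (σ₁ v₀) (σ₁ v₀)]
    rw [c1]
    rw [ip_star_star hstar₁ hsq₁ v₀.2 v₀.2]
    rw [Complex.conj_conj]
  have hu2 : lam * (starRingEnd ℂ) lam = 1 := by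
    have h9 := w1.symm.trans w2
    rw [hg v₀ v₀] at h9
    exact mul_right_cancel₀ hv₀ip (h9.trans (one_mul _).symm)
  -- the unimodular constant μ
  set μ : ℂ := Complex.exp (Complex.log lam / 2) with hμ
  have hμμ : μ * μ = lam := by
    rw [hμ, ← Complex.exp_add, add_halves, Complex.exp_log hlamne]
  have habs : ‖μ‖ = 1 := by
    have h1 : ‖μ‖ * ‖μ‖ = ‖lam‖ := by rw [← norm_mul, hμμ]
    have h2 : ‖lam‖ = 1 := by
      have h3 : Complex.normSq lam = 1 := by
        have h5 := hu2
        rw [Complex.mul_conj] at h5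
        exact_mod_cast h5
      have h4 := Complex.sq_norm lam
      rw [h3] at h4
      nlinarith [norm_nonneg lam]
    nlinarith [norm_nonneg μ]
  have hμconj : μ * (starRingEnd ℂ) μ = 1 := by
    rw [Complex.mul_conj]
    have h3 : Complex.normSq μ = 1 := by
      rw [← Complex.sq_norm, habs]
      norm_num
    rw [h3]
    norm_num
  refine ⟨μ, habs, ?_, ?_⟩
  · intro x y hxy
    have hy : y = σ₁ x := Subtype.ext (by rw [c1]; exact hxy)
    have hphis : φ (σ₁ x) = (starRingEnd ℂ) lam • σ₂ (φ x) := by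
      have h7 : σ₂ (k x) = φ (σ₁ x) := σ₂invol _
      rw [← h7, hklam x, σ₂smul]
    rw [hy, hphis]
    rw [show ((((starRingEnd ℂ) lam) • σ₂ (φ x) : Z₂) : H₂ →L[ℂ] H₂)
        = (starRingEnd ℂ) lam • ((σ₂ (φ x) : Z₂) : H₂ →L[ℂ] H₂) from rfl]
    rw [c2, star_smul, smul_smul]
    rw [show (star μ : ℂ) = (starRingEnd ℂ) μ from rfl]
    congr 1
    have h5 : (starRingEnd ℂ) lam = (starRingEnd ℂ) μ * (starRingEnd ℂ) μ := by
      rw [← map_mul, hμμ]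
    rw [h5, ← mul_assoc, hμconj, one_mul]
  · intro x y cc dd h1 h2
    have e1 : ipOp (x : H₁ →L[ℂ] H₁) (y : H₁ →L[ℂ] H₁) = cc := ipOp_eq h1
    have e2 : ipOp (μ • (φ x : H₂ →L[ℂ] H₂)) (μ • (φ y : H₂ →L[ℂ] H₂)) = dd := ipOp_eq h2
    rw [ip_smul_left hstar₂ hsq₂ μ (φ x).2 (Z₂.smul_mem μ (φ y).2)] at e2
    rw [ip_smul_right hstar₂ hsq₂ μ (φ x).2 (φ y).2] at e2
    rw [hg x y, e1] at e2
    rw [← e2, ← mul_assoc, hμconj, one_mul]
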